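/- Assume e ∈ dcl(Σ). Then the subgroups Autf_KP(Σ, e)/Autf_L(Σ, e) and Autf_S(Σ, e)/Autf_L(Σ, e) are closed in the topological group Gal_L(Σ, e). -/

import Mathlib

/- Framework: relativized Lascar groups of a first-order theory over a
hyperimaginary, following "Relativized Galois groups of first order theories
over a hyperimaginary" by H. Lee and J. Lee. -/

open FirstOrder Cardinal Pointwise

universe u

namespace RelLascar

variable {L : FirstOrder.Language.{u, u}} {M : Type u} [L.Structure M]

/-- The group of automorphisms of the monster model `M`. -/
instance : Group (M ≃[L] M) where
  mul f g := f.comp g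
  one := FirstOrder.Language.Equiv.refl L M
  inv f := f.symm
  mul_assoc f g h := (FirstOrder.Language.Equiv.comp_assoc h g f).symm
  one_mul := FirstOrder.Language.Equiv.refl_comp
  mul_one := FirstOrder.Language.Equiv.comp_refl
  inv_mul_cancel := FirstOrder.Language.Equiv.symm_comp_self

/-- Automorphisms act on the monster model. -/
instance : MulAction (M ≃[L] M) M where
  smul f x := f x
  one_smul _ := rfl
  mul_smul _ _ _ := rfl

@[simp] theorem autSmul_def (f : M ≃[L] M) (x : M) : f • x = f x := rfl

/-- The solution set in `M` of a set of formulas in variables `ι` with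
parameters `prm : π → M`. -/
def SolSet {ι π : Type u} (p : Set (L.Formula (ι ⊕ π))) (prm : π → M) : Set (ι → M) :=
  {v | ∀ φ ∈ p, φ.Realize (Sum.elim v prm)}

/-- A set of `ι`-tuples is type-definable over the parameters `prm`. -/
def TypeDefinableOver {ι π : Type u} (prm : π → M) (X : Set (ι → M)) : Prop :=
  ∃ p : Set (L.Formula (ι ⊕ π)), X = SolSet p prm

/-- Two tuples have the same (complete) type over `∅`. -/
def SameTp {ι : Type u} (c d : ι → M) : Prop :=
  ∀ φ : L.Formula ι, φ.Realize c ↔ φ.Realize d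

/-- `M` is a monster model with degree of saturation and strong homogeneity `κ`:
`κ` is uncountable, tuples of size `< κ` with the same type are conjugate under an
automorphism, and every partial type in `< κ` variables over `< κ` parameters that
is finitely realized in `M` is realized in `M`.  ("Small" means of size `< κ`.) -/
def IsMonster (κ : Cardinal.{u}) (L : FirstOrder.Language.{u, u}) (M : Type u) [L.Structure M] : Prop :=
  ℵ₀ < κ ∧
  (∀ (ι : Type u) (c d : ι → M), #ι < κ → SameTp (L := L) (M := M) c d →
      ∃ f : M ≃[L] M, ∀ i, f (c i) = d i) ∧
  (∀ (ι π : Type u) (prm : π → M) (p : Set (L.Formula (ι ⊕ π))), #ι < κ → #π < κ →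
      (∀ q : Finset (L.Formula (ι ⊕ π)), ↑q ⊆ p →
        ∃ v : ι → M, ∀ φ ∈ (q : Set (L.Formula (ι ⊕ π))), φ.Realize (Sum.elim v prm)) →
      ∃ v : ι → M, v ∈ SolSet p prm)

variable (κ : Cardinal.{u})

section Hyperimaginary

/- The hyperimaginary `e = a_E`, where `E` is the `∅`-type-definable equivalence
relation defined by the set of formulas `pE` and `a : γ → M`. -/
variable {γ : Type u} (pE : Set (L.Formula (γ ⊕ γ))) (a : γ → M)

/-- The relation defined by a set of formulas in variables `δ ⊕ δ` (with no
parameters); for `pE` this is the equivalence relation `E`. -/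
def Frel {δ : Type u} (pF : Set (L.Formula (δ ⊕ δ))) (x y : δ → M) : Prop :=
  ∀ φ ∈ pF, φ.Realize (Sum.elim x y)

/-- The class of a tuple `x` under the relation defined by `pF`; for an
equivalence relation this is the hyperimaginary `x_F` (as a set of representatives). -/
def Fclass {δ : Type u} (pF : Set (L.Formula (δ ⊕ δ))) (x : δ → M) : Set (δ → M) :=
  {y | Frel pF x y}

/-- `Aut_e(𝔠)`: the subgroup of automorphisms fixing the hyperimaginary
`e = a_E` setwise. -/
def AutE : Subgroup (M ≃[L] M) := MulAction.stabilizer (M ≃[L] M) (Fclass pE a)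

/-- `Aut_e(𝔠)` as a group. -/
abbrev Ge := ↥(AutE pE a)

/-- The hyperimaginary `e` is definable over the tuple `t` (i.e. `e ∈ dcl(t)`):
every automorphism fixing `t` pointwise fixes `e`. -/
def eInDclTuple {ι : Type u} (t : ι → M) : Prop :=
  ∀ f : M ≃[L] M, (∀ i, f (t i) = t i) → f ∈ AutE pE a

/-- The set of elements of `Aut_e(𝔠)` fixing pointwise some small elementary
substructure (model) `N` with `e ∈ dcl(N)`. -/
def modelFixers : Set (Ge pE a) :=
  {f | ∃ N : L.ElementarySubstructure M, #N < κ ∧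
        (∀ g : M ≃[L] M, (∀ x ∈ N, g x = x) → g ∈ AutE pE a) ∧
        ∀ x ∈ N, (f : M ≃[L] M) x = x}

/-- `Autf_L(𝔠, e)`: the normal subgroup of `Aut_e(𝔠)` generated by the
pointwise stabilizers of small models `N` with `e ∈ dcl(N)`. -/
def AutfL : Subgroup (Ge pE a) := Subgroup.normalClosure (modelFixers κ pE a)

/-- `c ≡ᴸ_e d` : the tuples have the same Lascar strong type over `e`. -/
def LEq {ι : Type u} (c d : ι → M) : Prop := ∃ f ∈ AutfL κ pE a, f • c = d

theorem LEq.refl {ι : Type u} (c : ι → M) : LEq κ pE a c c :=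
  ⟨1, one_mem _, one_smul _ _⟩

theorem LEq.symm {ι : Type u} {c d : ι → M} (h : LEq κ pE a c d) : LEq κ pE a d c := by
  obtain ⟨f, hf, rfl⟩ := h
  exact ⟨f⁻¹, inv_mem hf, inv_smul_smul f c⟩

theorem LEq.trans {ι : Type u} {c d e : ι → M} (h1 : LEq κ pE a c d)
    (h2 : LEq κ pE a d e) : LEq κ pE a c e := by
  obtain ⟨f, hf, rfl⟩ := h1
  obtain ⟨g, hg, rfl⟩ := h2
  exact ⟨g * f, mul_mem hg hf, (mul_smul g f c).symm ▸ rfl⟩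

end Hyperimaginary

section Sigma

variable {γ : Type u} (pE : Set (L.Formula (γ ⊕ γ))) (a : γ → M)
variable {V β : Type u} {pS : Set (L.Formula (V ⊕ β))} {bp : β → M}

/-- The solution set `Σ(𝔠)` of the partial type `Σ` (given by formulas `pS` over
the parameters `bp`). -/
abbrev Sol (pS : Set (L.Formula (V ⊕ β))) (bp : β → M) : Set (V → M) := SolSet pS bp

/-- The type of realizations of `Σ`. -/
abbrev SolT (pS : Set (L.Formula (V ⊕ β))) (bp : β → M) := ↥(Sol pS bp)

variable (pS bp) in
/-- The partial type `Σ` is `e`-invariant. -/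
def SolInv : Prop := ∀ (g : Ge pE a) (v : V → M), v ∈ Sol pS bp → g • v ∈ Sol pS bp

/-- The restriction homomorphism `Aut_e(𝔠) → Perm(Σ(𝔠))`, `f ↦ f ↾ Σ(𝔠)`. -/
def resPerm (hInv : SolInv pE a pS bp) : Ge pE a →* Equiv.Perm (SolT pS bp) where
  toFun g :=
    { toFun := fun v => ⟨g • (v : V → M), hInv g v v.2⟩
      invFun := fun v => ⟨g⁻¹ • (v : V → M), hInv g⁻¹ v v.2⟩
      left_inv := fun v => Subtype.ext (inv_smul_smul g (v : V → M))
      right_inv := fun v => Subtype.ext (smul_inv_smul g (v : V → M)) }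
  map_one' := Equiv.ext fun v => Subtype.ext (one_smul (Ge pE a) (v : V → M))
  map_mul' g h := Equiv.ext fun v => Subtype.ext (mul_smul g h (v : V → M))

/-- `Aut_e(Σ) = {f ↾ Σ(𝔠) : f ∈ Aut_e(𝔠)}`, as a subgroup of the permutations of
`Σ(𝔠)`. -/
def AutES (hInv : SolInv pE a pS bp) : Subgroup (Equiv.Perm (SolT pS bp)) :=
  (resPerm pE a hInv).range

/-- `Aut_e(Σ)` as a group. -/
abbrev GS (hInv : SolInv pE a pS bp) := ↥(AutES pE a hInv)

/-- The restriction map `ξ : Aut_e(𝔠) → Aut_e(Σ)`. -/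
def toGS (hInv : SolInv pE a pS bp) : Ge pE a →* GS pE a hInv :=
  (resPerm pE a hInv).rangeRestrict

/-- A tuple of realizations of `Σ`, flattened to a tuple of elements of `M`. -/
def flat {ι : Type u} (c : ι → SolT pS bp) : ι × V → M := fun p => (c p.1 : V → M) p.2

theorem flat_toGS_smul (hInv : SolInv pE a pS bp) {ι : Type u} (g : Ge pE a)
    (c : ι → SolT pS bp) : flat ((toGS pE a hInv g) • c) = g • flat c := rfl

theorem flat_smul_of_res (hInv : SolInv pE a pS bp) {ι : Type u} {τ : GS pE a hInv}
    {g : Ge pE a} (hg : resPerm pE a hInv g = ↑τ) (c : ι → SolT pS bp) :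
    flat (τ • c) = g • flat c := by
  have : τ = toGS pE a hInv g := Subtype.ext hg.symm
  subst this
  rfl

/-- `Autf_L(Σ, e)`: the subgroup of `Aut_e(Σ)` consisting of those restricted
automorphisms `σ` such that every small tuple of realizations of `Σ` has the same
Lascar strong type over `e` as its image under `σ`. -/
def AutfLS (hInv : SolInv pE a pS bp) : Subgroup (GS pE a hInv) where
  carrier := {σ | ∀ (ι : Type u), #ι < κ → ∀ c : ι → SolT pS bp,
      LEq κ pE a (flat c) (flat (σ • c))}
  one_mem' := by
    intro ι _ c
    rw [one_smul]
    exact LEq.refl κ pE a _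
  mul_mem' := by
    intro σ τ hσ hτ ι hι c
    rw [mul_smul]
    exact LEq.trans κ pE a (hτ ι hι c) (hσ ι hι (τ • c))
  inv_mem' := by
    intro σ hσ ι hι c
    have h := hσ ι hι (σ⁻¹ • c)
    rw [smul_inv_smul] at h
    exact LEq.symm κ pE a h

theorem AutfLS_normal (hInv : SolInv pE a pS bp) : (AutfLS κ pE a hInv).Normal := by
  constructor
  intro σ hσ τ ι hι c
  obtain ⟨g, hg⟩ := τ.2
  have hginv : resPerm pE a hInv g⁻¹ = ↑τ⁻¹ := by
    rw [map_inv, hg]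
    rfl
  obtain ⟨f, hf, hfe⟩ := hσ ι hι (τ⁻¹ • c)
  refine ⟨g * f * g⁻¹, (Subgroup.normalClosure_normal).conj_mem f hf g, ?_⟩
  have h1 : flat (τ⁻¹ • c) = g⁻¹ • flat c := flat_smul_of_res pE a hInv hginv c
  have h2 : flat ((τ * σ * τ⁻¹) • c) = g • flat (σ • τ⁻¹ • c) := by
    rw [mul_smul, mul_smul]
    exact flat_smul_of_res pE a hInv hg _
  rw [h2, ← hfe, h1, ← mul_smul, ← mul_smul]

/-- The relativized Lascar group `Gal_L(Σ, e) = Aut_e(Σ) / Autf_L(Σ, e)`. -/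
def GalL (hInv : SolInv pE a pS bp) := GS pE a hInv ⧸ AutfLS κ pE a hInv

/-- The projection `π_b : Aut_e(Σ) → Gal_L(Σ, e)`. -/
def projb (hInv : SolInv pE a pS bp) : GS pE a hInv → GalL κ pE a hInv :=
  QuotientGroup.mk

/-- The projection `π_Σ : Aut_e(𝔠) → Gal_L(Σ, e)`. -/
def projS (hInv : SolInv pE a pS bp) : Ge pE a → GalL κ pE a hInv :=
  fun g => projb κ pE a hInv (toGS pE a hInv g)

/-- A Lascar tuple in `Σ` over `e`: a small tuple `b` of realizations of `Σ` such
that `Autf_L(Σ, e) = {σ ∈ Aut_e(Σ) : b ≡ᴸ_e σ(b)}`. -/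
def IsLascarTuple (hInv : SolInv pE a pS bp) {ιb : Type u} (b : ιb → SolT pS bp) : Prop :=
  #ιb < κ ∧ ∀ σ : GS pE a hInv,
    σ ∈ AutfLS κ pE a hInv ↔ LEq κ pE a (flat b) (flat (σ • b))

variable (pS bp) in
/-- `e ∈ dcl(Σ)`: there is a small tuple of realizations of `Σ` over which `e` is
definable. -/
def eInDclSigma : Prop :=
  ∃ (ι : Type u) (c : ι → SolT pS bp), #ι < κ ∧ eInDclTuple pE a (flat c)

/-- The complete type of the tuple `v` over the parameters `prm` (with both
indexed by `ι`): the set of formulas realized by `v` with parameters `prm`. -/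
def tpOver {ι : Type u} (prm v : ι → M) : Set (L.Formula (ι ⊕ ι)) :=
  {φ | φ.Realize (Sum.elim v prm)}

/-- The type space `S_b(b) = {tp(f(b)/b) : f ∈ Aut_e(𝔠)}` over a tuple `b` of
realizations of `Σ`. -/
def Sb {ιb : Type u} (b : ιb → SolT pS bp) :
    Set (Set (L.Formula ((ιb × V) ⊕ (ιb × V)))) :=
  Set.range fun g : Ge pE a => tpOver (flat b) (g • flat b)

/-- The logic topology on a set of types: the subspace topology induced from the
product topology on `Formula → Bool` via characteristic functions. -/
noncomputable def typeSetTop {F : Type u} (X : Set (Set F)) : TopologicalSpace ↥X :=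
  TopologicalSpace.induced
    (fun p (φ : F) => (p : Set F).boolIndicator φ) inferInstance

/-- The map `ν_b : S_b(b) → Gal_L(Σ, e)`, `tp(σ(b)/b) ↦ [σ]`. -/
noncomputable def nub (hInv : SolInv pE a pS bp) {ιb : Type u} (b : ιb → SolT pS bp) :
    ↥(Sb pE a b) → GalL κ pE a hInv :=
  fun p => projS κ pE a hInv (Set.mem_range.mp p.2).choose

/-- The topology `𝔱_b` on the relativized Lascar group `Gal_L(Σ, e)`: the quotient
topology induced by `ν_b` from the logic topology on `S_b(b)`. -/
noncomputable def galTopb (hInv : SolInv pE a pS bp) {ιb : Type u}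
    (b : ιb → SolT pS bp) : TopologicalSpace (GalL κ pE a hInv) :=
  (typeSetTop (Sb pE a b)).coinduced (nub κ pE a hInv b)

end Sigma

section GalT

variable {γ : Type u} (pE : Set (L.Formula (γ ⊕ γ))) (a : γ → M)

/-- The Lascar group `Gal_L(T, e) = Aut_e(𝔠) / Autf_L(𝔠, e)`. -/
def GalT := Ge pE a ⧸ AutfL κ pE a

/-- The projection `π : Aut_e(𝔠) → Gal_L(T, e)`. -/
def projT : Ge pE a → GalT κ pE a := QuotientGroup.mk

/-- The type space `S_N(N) = {tp(f(N)/N) : f ∈ Aut_e(𝔠)}` over a small model `N`. -/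
def SMod (N : L.ElementarySubstructure M) : Set (Set (L.Formula (↥N ⊕ ↥N))) :=
  Set.range fun g : Ge pE a =>
    tpOver (Subtype.val : ↥N → M) (g • (Subtype.val : ↥N → M))

/-- The map `ν : S_N(N) → Gal_L(T, e)`, `tp(f(N)/N) ↦ [f]`. -/
noncomputable def nuT (N : L.ElementarySubstructure M) :
    ↥(SMod pE a N) → GalT κ pE a :=
  fun p => projT κ pE a (Set.mem_range.mp p.2).choose

/-- The standard quotient topology on the Lascar group `Gal_L(T, e)` induced via
the type space over a small model `N` (with `e ∈ dcl(N)`). -/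
noncomputable def galTopT (N : L.ElementarySubstructure M) :
    TopologicalSpace (GalT κ pE a) :=
  (typeSetTop (SMod pE a N)).coinduced (nuT κ pE a N)

/-- `Autf_KP(𝔠, e)`: the preimage under `π` of the closure of the identity in
`Gal_L(T, e)`. -/
noncomputable def AutfKPset (N : L.ElementarySubstructure M) : Set (Ge pE a) :=
  projT κ pE a ⁻¹' (@closure _ (galTopT κ pE a N) {projT κ pE a 1})

/-- `Autf_S(𝔠, e)`: the preimage under `π` of the connected component of the
identity in `Gal_L(T, e)`. -/
noncomputable def AutfSset (N : L.ElementarySubstructure M) : Set (Ge pE a) :=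
  projT κ pE a ⁻¹' (@connectedComponent _ (galTopT κ pE a N) (projT κ pE a 1))

/-- `c ≡ᴷᴾ_e d` : the tuples have the same KP strong type over `e`. -/
def KPeq (N : L.ElementarySubstructure M) {ι : Type u} (c d : ι → M) : Prop :=
  ∃ f ∈ AutfKPset κ pE a N, f • c = d

/-- `c ≡ˢ_e d` : the tuples have the same Shelah strong type over `e`. -/
def Seq (N : L.ElementarySubstructure M) {ι : Type u} (c d : ι → M) : Prop :=
  ∃ f ∈ AutfSset κ pE a N, f • c = d

end GalT

section Relativized

variable {γ : Type u} (pE : Set (L.Formula (γ ⊕ γ))) (a : γ → M)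
variable {V β : Type u} {pS : Set (L.Formula (V ⊕ β))} {bp : β → M}

/-- `Autf_KP(Σ, e)`: the set of restricted automorphisms fixing the KP strong
type of every small tuple of realizations of `Σ`. -/
noncomputable def AutfKPSset (hInv : SolInv pE a pS bp) (N : L.ElementarySubstructure M) :
    Set (GS pE a hInv) :=
  {σ | ∀ (ι : Type u), #ι < κ → ∀ c : ι → SolT pS bp,
      KPeq κ pE a N (flat c) (flat (σ • c))}

/-- `Autf_S(Σ, e)`: the set of restricted automorphisms fixing the Shelah strong
type of every small tuple of realizations of `Σ`. -/
noncomputable def AutfSSset (hInv : SolInv pE a pS bp) (N : L.ElementarySubstructure M) :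
    Set (GS pE a hInv) :=
  {σ | ∀ (ι : Type u), #ι < κ → ∀ c : ι → SolT pS bp,
      Seq κ pE a N (flat c) (flat (σ • c))}

/-- The orbit under `Aut_e(𝔠)` of the hyperimaginary given by the class of `x`
under the relation defined by `pF` is small ("`x_F` is bounded over `e`"). -/
def BoundedClass {δ : Type u} (pF : Set (L.Formula (δ ⊕ δ))) (x : δ → M) : Prop :=
  #↥(Set.range fun g : Ge pE a => g • Fclass pF x) < κ

/-- The orbit under `Aut_e(𝔠)` of the hyperimaginary given by the class of `x` is
finite ("`x_F` is algebraic over `e`"). -/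
def FiniteClass {δ : Type u} (pF : Set (L.Formula (δ ⊕ δ))) (x : δ → M) : Prop :=
  (Set.range fun g : Ge pE a => g • Fclass pF x).Finite

/-- `f` fixes the hyperimaginary given by the class of `x` (setwise). -/
def FixesClass (f : Ge pE a) {δ : Type u} (pF : Set (L.Formula (δ ⊕ δ)))
    (x : δ → M) : Prop :=
  f • Fclass pF x = Fclass pF x

variable (pS bp) in
/-- `f` fixes every hyperimaginary that is bounded over `e` and has a
representative which is a small tuple of realizations of `Σ`, i.e. `f` fixes
`bdd(e) ∩ Σ` pointwise. -/
def fixesAllBddS (f : Ge pE a) : Prop :=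
  ∀ (ι : Type u) (pF : Set (L.Formula ((ι × V) ⊕ (ι × V)))) (c : ι → SolT pS bp),
    #ι < κ → Equivalence (Frel (M := M) pF) → BoundedClass κ pE a pF (flat c) →
    FixesClass pE a f pF (flat c)

variable (pS bp) in
/-- `f` fixes every hyperimaginary that is algebraic over `e` and has a
representative which is a small tuple of realizations of `Σ`, i.e. `f` fixes
`acl(e) ∩ Σ` pointwise. -/
def fixesAllAclS (f : Ge pE a) : Prop :=
  ∀ (ι : Type u) (pF : Set (L.Formula ((ι × V) ⊕ (ι × V)))) (c : ι → SolT pS bp),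
    #ι < κ → Equivalence (Frel (M := M) pF) → FiniteClass pE a pF (flat c) →
    FixesClass pE a f pF (flat c)

end Relativized


section More

variable {γ : Type u} (pE : Set (L.Formula (γ ⊕ γ))) (a : γ → M)
variable {V β : Type u} {pS : Set (L.Formula (V ⊕ β))} {bp : β → M}

theorem mem_AutfLS_iff (hInv : SolInv pE a pS bp) {σ : GS pE a hInv} :
    σ ∈ AutfLS κ pE a hInv ↔ ∀ (ι : Type u), #ι < κ → ∀ c : ι → SolT pS bp,
      LEq κ pE a (flat c) (flat (σ • c)) := Iff.rfl

theorem toGS_mem_autfLS (hInv : SolInv pE a pS bp) {f : Ge pE a}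
    (hf : f ∈ AutfL κ pE a) : toGS pE a hInv f ∈ AutfLS κ pE a hInv :=
  (mem_AutfLS_iff κ pE a hInv).mpr
    (fun ι _ c => ⟨f, hf, (flat_toGS_smul pE a hInv f c).symm⟩)

instance AutfL_normal : (AutfL κ pE a).Normal :=
  Subgroup.normalClosure_normal

/-- The group structure of the relativized Lascar group `Gal_L(Σ, e)`. -/
noncomputable def galLGroup (hInv : SolInv pE a pS bp) : Group (GalL κ pE a hInv) :=
  @QuotientGroup.Quotient.group _ _ (AutfLS κ pE a hInv) (AutfLS_normal κ pE a hInv)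

/-- The natural projection `ξ_L : Gal_L(T, e) → Gal_L(Σ, e)`. -/
noncomputable def xiL (hInv : SolInv pE a pS bp) : GalT κ pE a → GalL κ pE a hInv :=
  haveI := AutfLS_normal κ pE a hInv
  ⇑(QuotientGroup.map (AutfL κ pE a) (AutfLS κ pE a hInv) (toGS pE a hInv)
    (fun _ hf => Subgroup.mem_comap.mpr (toGS_mem_autfLS κ pE a hInv hf)))

/-- The orbit equivalence relation `≡ᴴ` of a set `H` of restricted automorphisms,
on tuples of realizations of `Σ`. -/
def orbEq {hInv : SolInv pE a pS bp} (H : Set (GS pE a hInv)) {ι : Type u}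
    (c d : ι → SolT pS bp) : Prop :=
  ∃ h ∈ H, h • c = d

end More


section AuxTop

theorem mem_closure_pi {F : Type u} {S : Set (F → Bool)} {x : F → Bool} :
    x ∈ closure S ↔ ∀ Φ : Finset F, ∃ y ∈ S, ∀ φ ∈ Φ, y φ = x φ := by
  constructor
  · intro hx Φ
    have hU : IsOpen {y : F → Bool | ∀ φ ∈ Φ, y φ = x φ} := by
      have he : {y : F → Bool | ∀ φ ∈ Φ, y φ = x φ} = ⋂ φ ∈ Φ, (fun y : F → Bool => y φ) ⁻¹' {x φ} := by
        ext y; simp [Set.mem_iInter]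
      rw [he]
      exact isOpen_biInter_finset fun φ _ =>
        (isOpen_discrete _).preimage (continuous_apply φ)
    obtain ⟨y, hy1, hy2⟩ := mem_closure_iff.mp hx _ hU (fun φ _ => rfl)
    exact ⟨y, hy2, hy1⟩
  · intro h
    rw [mem_closure_iff]
    intro U hU hxU
    obtain ⟨I, u, hIu, hsub⟩ := isOpen_pi_iff.mp hU x hxU
    obtain ⟨y, hyS, hyx⟩ := h I
    refine ⟨y, hsub fun i hi => ?_, hyS⟩
    rw [hyx i hi]
    exact (hIu i hi).2

theorem isClosed_coinduced_iff {α β : Type u} {t : TopologicalSpace α} {f : α → β}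
    {s : Set β} : @IsClosed _ (t.coinduced f) s ↔ @IsClosed _ t (f ⁻¹' s) := by
  rw [← @isOpen_compl_iff _ _ (t.coinduced f), ← @isOpen_compl_iff _ _ t, isOpen_coinduced,
    Set.preimage_compl]

end AuxTop

section AuxMT

theorem mem_tpOver {ι : Type u} {prm v : ι → M} {φ : L.Formula (ι ⊕ ι)} :
    φ ∈ tpOver (M := M) prm v ↔ φ.Realize (Sum.elim v prm) := Iff.rfl

theorem mem_of_closed_type {α : Type u} {prm : α → M}
    {X : Set (Set (L.Formula (α ⊕ α)))}
    (hX : ∀ p : ↥X, ∃ w : α → M, (p : Set (L.Formula (α ⊕ α))) = tpOver prm w)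
    {A : Set ↥X} (hA : @IsClosed _ (typeSetTop X) A) (p : ↥X)
    (hp : ∀ ψ : L.Formula (α ⊕ α), (∀ q ∈ A, ψ ∈ (q : Set (L.Formula (α ⊕ α)))) →
       ψ ∈ (p : Set (L.Formula (α ⊕ α)))) :
    p ∈ A := by
  classical
  obtain ⟨T, hT, hTA⟩ := isClosed_induced_iff.mp hA
  by_contra hpA
  have hpT : (fun φ => (p : Set (L.Formula (α ⊕ α))).boolIndicator φ) ∉ T := by
    intro hc
    rw [← hTA] at hpA
    exact hpA hc
  obtain ⟨I, u, hIu, hsub⟩ := isOpen_pi_iff.mp hT.isOpen_compl _ hpT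
  obtain ⟨wp, hwp⟩ := hX p
  set ψ : L.Formula (α ⊕ α) :=
    FirstOrder.Language.BoundedFormula.iSup
      (fun χ : ↥I => if (χ : L.Formula (α ⊕ α)) ∈ (p : Set (L.Formula (α ⊕ α))) then
        (χ : L.Formula (α ⊕ α)).not else (χ : L.Formula (α ⊕ α))) with hψdef
  have hψq : ∀ q ∈ A, ψ ∈ (q : Set (L.Formula (α ⊕ α))) := by
    intro q hq
    obtain ⟨wq, hwq⟩ := hX q
    by_contra hψnq
    have hagree : ∀ χ ∈ I, (q : Set (L.Formula (α ⊕ α))).boolIndicator χ =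
        (p : Set (L.Formula (α ⊕ α))).boolIndicator χ := by
      intro χ hχ
      have hnot : ¬ (if χ ∈ (p : Set (L.Formula (α ⊕ α))) then χ.not else χ).Realize
          (Sum.elim wq prm) := by
        intro hr
        apply hψnq
        rw [hwq, mem_tpOver]
        exact FirstOrder.Language.BoundedFormula.realize_iSup.mpr ⟨⟨χ, hχ⟩, hr⟩
      by_cases hme : χ ∈ (p : Set (L.Formula (α ⊕ α)))
      · rw [if_pos hme, FirstOrder.Language.Formula.realize_not, not_not] at hnot
        have hq' : χ ∈ (q : Set (L.Formula (α ⊕ α))) := by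
          rw [hwq, mem_tpOver]; exact hnot
        rw [(Set.mem_iff_boolIndicator _ _).mp hq', (Set.mem_iff_boolIndicator _ _).mp hme]
      · rw [if_neg hme] at hnot
        have hq' : χ ∉ (q : Set (L.Formula (α ⊕ α))) := by
          rw [hwq, mem_tpOver]; exact hnot
        rw [(Set.notMem_iff_boolIndicator _ _).mp hq',
          (Set.notMem_iff_boolIndicator _ _).mp hme]
    have hqT : (fun φ => (q : Set (L.Formula (α ⊕ α))).boolIndicator φ) ∈ T := by
      rw [← hTA] at hq
      exact hq
    have hqpi : (fun φ => (q : Set (L.Formula (α ⊕ α))).boolIndicator φ) ∈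
        (I : Set (L.Formula (α ⊕ α))).pi u := by
      intro χ hχ
      show (q : Set (L.Formula (α ⊕ α))).boolIndicator χ ∈ u χ
      rw [hagree χ hχ]
      exact (hIu χ hχ).2
    exact (hsub hqpi) hqT
  have hψp := hp ψ hψq
  rw [hwp, mem_tpOver] at hψp
  obtain ⟨⟨χ, hχI⟩, hχr'⟩ :=
    FirstOrder.Language.BoundedFormula.realize_iSup.mp hψp
  have hχr : (if χ ∈ (p : Set (L.Formula (α ⊕ α))) then χ.not else χ).Realize
      (Sum.elim wp prm) := hχr'
  by_cases hme : χ ∈ (p : Set (L.Formula (α ⊕ α)))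
  · rw [if_pos hme, FirstOrder.Language.Formula.realize_not] at hχr
    rw [hwp, mem_tpOver] at hme
    exact hχr hme
  · rw [if_neg hme] at hχr
    exact hme (by rw [hwp, mem_tpOver]; exact hχr)

end AuxMT

section AuxGal

variable {γ : Type u} (pE : Set (L.Formula (γ ⊕ γ))) (a : γ → M)
variable {V β : Type u} {pS : Set (L.Formula (V ⊕ β))} {bp : β → M}

theorem frel_comp {δ : Type u} (pF : Set (L.Formula (δ ⊕ δ))) (h : M ≃[L] M)
    (x y : δ → M) : Frel (M := M) pF (⇑h ∘ x) (⇑h ∘ y) ↔ Frel pF x y := by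
  unfold Frel
  refine forall₂_congr fun φ hφ => ?_
  have he : Sum.elim (⇑h ∘ x) (⇑h ∘ y) = ⇑h ∘ Sum.elim x y := by
    funext i; cases i <;> rfl
  rw [he, FirstOrder.Language.StrongHomClass.realize_formula]

theorem mem_AutE_iff_frel (hE : Equivalence (Frel (M := M) pE)) (h : M ≃[L] M) :
    h ∈ AutE pE a ↔ Frel pE (⇑h ∘ a) a := by
  rw [AutE, MulAction.mem_stabilizer_iff]
  constructor
  · intro hs
    have ha : a ∈ Fclass pE a := hE.refl a
    have hmem : (⇑h ∘ a) ∈ h • Fclass (M := M) pE a := ⟨a, ha, rfl⟩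
    rw [hs] at hmem
    exact hE.symm hmem
  · intro hrel
    ext y
    rw [Set.mem_smul_set]
    constructor
    · rintro ⟨x, hx, rfl⟩
      show Frel pE a (h • x)
      have hsm : (h • x : γ → M) = ⇑h ∘ x := rfl
      rw [hsm]
      exact hE.trans (hE.symm hrel) ((frel_comp pE h a x).mpr hx)
    · intro hy
      refine ⟨⇑h.symm ∘ y, ?_, ?_⟩
      · have h2 : Frel (M := M) pE (⇑h ∘ a) (⇑h ∘ (⇑h.symm ∘ y)) := by
          have hyy : ⇑h ∘ (⇑h.symm ∘ y) = y := by
            funext i; exact h.apply_symm_apply (y i)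
          rw [hyy]
          exact hE.trans hrel hy
        exact (frel_comp pE h a _).mp h2
      · show h • (⇑h.symm ∘ y) = y
        funext i
        exact h.apply_symm_apply (y i)

theorem exists_fix_aux (hM : IsMonster κ L M) {ι : Type u} (hι : #ι < κ) (c : ι → M)
    {f g : Ge pE a} (h : tpOver (L := L) c (f • c) = tpOver c (g • c)) :
    ∃ h₀ : M ≃[L] M, (∀ i, h₀ (c i) = c i) ∧
      (∀ i, h₀ ((f : M ≃[L] M) (c i)) = (g : M ≃[L] M) (c i)) := by
  have hcard : #(ι ⊕ ι) < κ := by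
    rw [Cardinal.mk_sum]
    simp only [Cardinal.lift_id]
    exact Cardinal.add_lt_of_lt hM.1.le hι hι
  have hsame : SameTp (L := L) (M := M) (Sum.elim (f • c) c) (Sum.elim (g • c) c) :=
    fun φ => Set.ext_iff.mp h φ
  obtain ⟨h₀, hh₀⟩ := hM.2.1 (ι ⊕ ι) _ _ hcard hsame
  exact ⟨h₀, fun i => hh₀ (Sum.inr i), fun i => hh₀ (Sum.inl i)⟩

theorem projT_eq_of_type_eq (hM : IsMonster κ L M)
    (N : L.ElementarySubstructure M) (hN : #N < κ)
    (hNdcl : ∀ g : M ≃[L] M, (∀ x ∈ N, g x = x) → g ∈ AutE pE a)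
    {f g : Ge pE a}
    (h : tpOver (L := L) (Subtype.val : ↥N → M) (f • Subtype.val) =
         tpOver (Subtype.val : ↥N → M) (g • Subtype.val)) :
    projT κ pE a f = projT κ pE a g := by
  obtain ⟨h₀, hfix, hmap⟩ := exists_fix_aux κ pE a hM hN Subtype.val h
  have hfix' : ∀ x ∈ N, h₀ x = x := fun x hx => hfix ⟨x, hx⟩
  have h₀E : h₀ ∈ AutE pE a := hNdcl h₀ hfix'
  set hh : Ge pE a := ⟨h₀, h₀E⟩ with hhdef
  have hhF : hh ∈ AutfL κ pE a :=
    Subgroup.subset_normalClosure ⟨N, hN, hNdcl, hfix'⟩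
  set u : Ge pE a := (hh * f)⁻¹ * g with hudef
  have hufix : ∀ x ∈ N, (u : M ≃[L] M) x = x := by
    intro x hx
    show ((hh * f : Ge pE a) : M ≃[L] M).symm ((g : M ≃[L] M) x) = x
    rw [show (g : M ≃[L] M) x = ((hh * f : Ge pE a) : M ≃[L] M) x from (hmap ⟨x, hx⟩).symm]
    exact FirstOrder.Language.Equiv.symm_apply_apply _ _
  have huF : u ∈ AutfL κ pE a :=
    Subgroup.subset_normalClosure ⟨N, hN, hNdcl, hufix⟩
  have hgu : g = hh * f * u := by rw [hudef, mul_inv_cancel_left]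
  refine (QuotientGroup.eq (s := AutfL κ pE a)).mpr ?_
  have heq : f⁻¹ * g = (f⁻¹ * hh * f⁻¹⁻¹) * u := by
    rw [hgu]; group
  rw [heq]
  exact mul_mem ((AutfL_normal κ pE a).conj_mem hh hhF f⁻¹) huF

theorem projS_eq_of_type_eq (hM : IsMonster κ L M) (hV : #V < κ)
    (hInv : SolInv pE a pS bp) {ιb : Type u} {b : ιb → SolT pS bp}
    (hb : IsLascarTuple κ pE a hInv b) (hbdcl : eInDclTuple pE a (flat b))
    {f g : Ge pE a}
    (h : tpOver (L := L) (flat b) (f • flat b) = tpOver (flat b) (g • flat b)) :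
    projS κ pE a hInv f = projS κ pE a hInv g := by
  haveI := AutfLS_normal κ pE a hInv
  have hιbV : #(ιb × V) < κ := by
    rw [Cardinal.mk_prod]
    simp only [Cardinal.lift_id]
    exact Cardinal.mul_lt_of_lt hM.1.le hb.1 hV
  obtain ⟨h₀, hfix, hmap⟩ := exists_fix_aux κ pE a hM hιbV (flat b) h
  have h₀E : h₀ ∈ AutE pE a := hbdcl h₀ hfix
  set hh : Ge pE a := ⟨h₀, h₀E⟩ with hhdef
  have fixLS : ∀ v : Ge pE a, (∀ i, (v : M ≃[L] M) (flat b i) = flat b i) →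
      toGS pE a hInv v ∈ AutfLS κ pE a hInv := by
    intro v hv
    refine (hb.2 _).mpr ?_
    rw [flat_toGS_smul pE a hInv]
    have hfb : v • flat b = flat b := funext fun i => hv i
    rw [hfb]
    exact LEq.refl κ pE a (flat b)
  set u : Ge pE a := (hh * f)⁻¹ * g with hudef
  have hufix : ∀ i, (u : M ≃[L] M) (flat b i) = flat b i := by
    intro i
    show ((hh * f : Ge pE a) : M ≃[L] M).symm ((g : M ≃[L] M) (flat b i)) = flat b i
    rw [show (g : M ≃[L] M) (flat b i) = ((hh * f : Ge pE a) : M ≃[L] M) (flat b i) from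
      (hmap i).symm]
    exact FirstOrder.Language.Equiv.symm_apply_apply _ _
  have hgu : g = hh * f * u := by rw [hudef, mul_inv_cancel_left]
  refine (QuotientGroup.eq (s := AutfLS κ pE a hInv)).mpr ?_
  have heq : (toGS pE a hInv f)⁻¹ * toGS pE a hInv g =
      ((toGS pE a hInv f)⁻¹ * toGS pE a hInv hh * ((toGS pE a hInv f)⁻¹)⁻¹) *
        toGS pE a hInv u := by
    rw [hgu, map_mul, map_mul]
    group
  rw [heq]
  exact mul_mem ((AutfLS_normal κ pE a hInv).conj_mem _
    (fixLS hh fun i => hfix i) _) (fixLS u hufix)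

theorem nuT_eq_projT (hM : IsMonster κ L M)
    (N : L.ElementarySubstructure M) (hN : #N < κ)
    (hNdcl : ∀ g : M ≃[L] M, (∀ x ∈ N, g x = x) → g ∈ AutE pE a)
    (f : Ge pE a)
    (hmem : tpOver (L := L) (Subtype.val : ↥N → M) (f • Subtype.val) ∈ SMod pE a N) :
    nuT κ pE a N ⟨_, hmem⟩ = projT κ pE a f := by
  unfold nuT
  apply projT_eq_of_type_eq κ pE a hM N hN hNdcl
  exact (Set.mem_range.mp hmem).choose_spec

theorem nub_eq_projS (hM : IsMonster κ L M) (hV : #V < κ)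
    (hInv : SolInv pE a pS bp) {ιb : Type u} (b : ιb → SolT pS bp)
    (hb : IsLascarTuple κ pE a hInv b) (hbdcl : eInDclTuple pE a (flat b))
    (p : ↥(Sb pE a b)) {g : Ge pE a}
    (hg : tpOver (L := L) (flat b) (g • flat b) = ↑p) :
    nub κ pE a hInv b p = projS κ pE a hInv g := by
  unfold nub
  apply projS_eq_of_type_eq κ pE a hM hV hInv hb hbdcl
  exact (Set.mem_range.mp p.2).choose_spec.trans hg.symm

end AuxGal

section AuxMain

variable {γ : Type u} (pE : Set (L.Formula (γ ⊕ γ))) (a : γ → M)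
variable {V β : Type u} {pS : Set (L.Formula (V ⊕ β))} {bp : β → M}

theorem closed_proj_preimage (hM : IsMonster κ L M) (hγ : #γ < κ)
    (hE : Equivalence (Frel (M := M) pE)) (hV : #V < κ)
    (hInv : SolInv pE a pS bp)
    {ιb : Type u} (b : ιb → SolT pS bp)
    (hb : IsLascarTuple κ pE a hInv b) (hbdcl : eInDclTuple pE a (flat b))
    (N : L.ElementarySubstructure M) (hN : #N < κ)
    (hNdcl : ∀ g : M ≃[L] M, (∀ x ∈ N, g x = x) → g ∈ AutE pE a)
    (K : Set (GalT κ pE a)) (hK : @IsClosed _ (galTopT κ pE a N) K) :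
    @IsClosed _ (galTopb κ pE a hInv b)
      (projb κ pE a hInv '' {σ : GS pE a hInv | ∀ (ι : Type u), #ι < κ →
        ∀ c : ι → SolT pS bp,
        ∃ f ∈ projT κ pE a ⁻¹' K, f • flat c = flat (σ • c)}) := by
  classical
  haveI := AutfLS_normal κ pE a hInv
  have goal_eq : galTopb κ pE a hInv b
      = (typeSetTop (Sb pE a b)).coinduced (nub κ pE a hInv b) := rfl
  rw [goal_eq, isClosed_coinduced_iff]
  set X : Set (GS pE a hInv) := {σ | ∀ (ι : Type u), #ι < κ → ∀ c : ι → SolT pS bp,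
    ∃ f ∈ projT κ pE a ⁻¹' K, f • flat c = flat (σ • c)} with hXdef
  set Y : Set ↥(Sb pE a b) := nub κ pE a hInv b ⁻¹' (projb κ pE a hInv '' X) with hYdef
  set ind : ↥(Sb pE a b) → ((L.Formula ((ιb × V) ⊕ (ιb × V))) → Bool) :=
    fun p φ => (p : Set (L.Formula ((ιb × V) ⊕ (ιb × V)))).boolIndicator φ with hinddef
  -- The closed set `W` of types over `N` corresponding to `K`
  set W : Set ↥(SMod pE a N) := nuT κ pE a N ⁻¹' K with hWdef
  have hcont : @Continuous _ _ (typeSetTop (SMod pE a N)) (galTopT κ pE a N)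
      (nuT κ pE a N) := continuous_coinduced_rng
  have hWclosed : @IsClosed _ (typeSetTop (SMod pE a N)) W :=
    @IsClosed.preimage _ _ (typeSetTop (SMod pE a N)) (galTopT κ pE a N)
      (nuT κ pE a N) hcont K hK
  have memSMod : ∀ f : Ge pE a,
      tpOver (L := L) (Subtype.val : ↥N → M) (f • Subtype.val) ∈ SMod pE a N :=
    fun f => ⟨f, rfl⟩
  have mem_W_iff : ∀ f : Ge pE a,
      ((⟨_, memSMod f⟩ : ↥(SMod pE a N)) ∈ W ↔ projT κ pE a f ∈ K) := by
    intro f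
    rw [hWdef, Set.mem_preimage, nuT_eq_projT κ pE a hM N hN hNdcl f (memSMod f)]
  set Ψ : Set (L.Formula (↥N ⊕ ↥N)) :=
    {ψ | ∀ q ∈ W, ψ ∈ (q : Set (L.Formula (↥N ⊕ ↥N)))} with hΨdef
  have hΨW : ∀ f : Ge pE a, (∀ ψ ∈ Ψ, ψ ∈ tpOver (L := L) (Subtype.val : ↥N → M)
      (f • Subtype.val)) → projT κ pE a f ∈ K := by
    intro f hf
    rw [← mem_W_iff f]
    refine mem_of_closed_type (prm := (Subtype.val : ↥N → M)) (fun q => ?_) hWclosed _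
      (fun ψ hψ => hf ψ hψ)
    obtain ⟨g, hg⟩ := Set.mem_range.mp q.2
    exact ⟨g • Subtype.val, hg.symm⟩
  have hΨmem : ∀ f : Ge pE a, projT κ pE a f ∈ K → ∀ ψ ∈ Ψ,
      ψ ∈ tpOver (L := L) (Subtype.val : ↥N → M) (f • Subtype.val) := by
    intro f hf ψ hψ
    exact hψ _ ((mem_W_iff f).mpr hf)
  -- `Y` is closed in the type-space topology
  refine isClosed_induced_iff.mpr ⟨closure (ind '' Y), isClosed_closure, ?_⟩
  refine Set.Subset.antisymm ?_ (fun p hp => subset_closure (Set.mem_image_of_mem _ hp))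
  intro p hp
  have hp' : ind p ∈ closure (ind '' Y) := hp
  obtain ⟨g, hg⟩ := Set.mem_range.mp p.2
  -- approximants: elements of `projT ⁻¹ K` realizing `p` up to finitely many formulas
  have happrox : ∀ Φ : Finset (L.Formula ((ιb × V) ⊕ (ιb × V))),
      ∃ f : Ge pE a, projT κ pE a f ∈ K ∧
        ∀ χ ∈ Φ, (χ ∈ tpOver (L := L) (flat b) (f • flat b) ↔
          χ ∈ (p : Set (L.Formula ((ιb × V) ⊕ (ιb × V))))) := by
    intro Φ
    obtain ⟨y, hyY, hyagree⟩ := mem_closure_pi.mp hp' Φ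
    obtain ⟨q', hq'Y, rfl⟩ := hyY
    rw [hYdef, Set.mem_preimage] at hq'Y
    obtain ⟨σ, hσX, hσeq⟩ := hq'Y
    obtain ⟨g', hg'⟩ := Set.mem_range.mp q'.2
    have hnub : nub κ pE a hInv b q' = projS κ pE a hInv g' :=
      nub_eq_projS κ pE a hM hV hInv b hb hbdcl q' hg'
    have hσg' : projb κ pE a hInv σ = projb κ pE a hInv (toGS pE a hInv g') := by
      rw [hσeq, hnub]; rfl
    have hl : σ⁻¹ * toGS pE a hInv g' ∈ AutfLS κ pE a hInv :=
      (QuotientGroup.eq (s := AutfLS κ pE a hInv)).mp hσg'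
    obtain ⟨m, hmF, hm⟩ := hl ιb hb.1 b
    obtain ⟨f₁, hf₁K, hf₁⟩ := hσX ιb hb.1 ((σ⁻¹ * toGS pE a hInv g') • b)
    refine ⟨f₁ * m, ?_, ?_⟩
    · have hTm : projT κ pE a (f₁ * m) = projT κ pE a f₁ :=
        (QuotientGroup.eq (s := AutfL κ pE a)).mpr (by
          have he : (f₁ * m)⁻¹ * f₁ = m⁻¹ := by group
          rw [he]; exact inv_mem hmF)
      rw [hTm]; exact hf₁K
    · intro χ hχ
      have h1 : (f₁ * m) • flat b = g' • flat b := by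
        rw [mul_smul, hm, hf₁, ← mul_smul, mul_inv_cancel_left]
        exact flat_toGS_smul pE a hInv g' b
      have h2 : tpOver (L := L) (flat b) ((f₁ * m) • flat b) = ↑q' := by
        rw [h1]; exact hg'
      rw [h2]
      have hind : (q' : Set (L.Formula ((ιb × V) ⊕ (ιb × V)))).boolIndicator χ =
          (p : Set (L.Formula ((ιb × V) ⊕ (ιb × V)))).boolIndicator χ := hyagree χ hχ
      rw [Set.mem_iff_boolIndicator ((q' : Set (L.Formula ((ιb × V) ⊕ (ιb × V))))) χ,
        Set.mem_iff_boolIndicator ((p : Set (L.Formula ((ιb × V) ⊕ (ιb × V))))) χ, hind]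
  -- the combined index type and parameters for the saturation argument
  set ιS : Type u := ↥N ⊕ ((ιb × V) ⊕ γ) with hiSdef
  set prm : ιS → M := Sum.elim (Subtype.val : ↥N → M) (Sum.elim (flat b) a) with hprmdef
  have hιS : #ιS < κ := by
    have h0 : ℵ₀ ≤ κ := hM.1.le
    have h1 : #(ιb × V) < κ := by
      rw [Cardinal.mk_prod]
      simp only [Cardinal.lift_id]
      exact Cardinal.mul_lt_of_lt h0 hb.1 hV
    rw [hiSdef, Cardinal.mk_sum]
    simp only [Cardinal.lift_id]
    rw [Cardinal.mk_sum]
    simp only [Cardinal.lift_id]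
    exact Cardinal.add_lt_of_lt h0 hN (Cardinal.add_lt_of_lt h0 h1 hγ)
  set rN : (↥N ⊕ ↥N) → (ιS ⊕ ιS) :=
    Sum.elim (Sum.inl ∘ Sum.inl) (Sum.inr ∘ Sum.inl) with hrNdef
  set rb : ((ιb × V) ⊕ (ιb × V)) → (ιS ⊕ ιS) :=
    Sum.elim (Sum.inl ∘ Sum.inr ∘ Sum.inl) (Sum.inr ∘ Sum.inr ∘ Sum.inl) with hrbdef
  set ra : (γ ⊕ γ) → (ιS ⊕ ιS) :=
    Sum.elim (Sum.inl ∘ Sum.inr ∘ Sum.inr) (Sum.inr ∘ Sum.inr ∘ Sum.inr) with hradef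
  set Γ : Set (L.Formula (ιS ⊕ ιS)) :=
    ((fun φ : L.Formula ιS => φ.relabel Sum.inl) '' {φ | φ.Realize prm}) ∪
    ((fun ψ : L.Formula (↥N ⊕ ↥N) => ψ.relabel rN) '' Ψ) ∪
    ((fun χ : L.Formula ((ιb × V) ⊕ (ιb × V)) => χ.relabel rb) ''
      (p : Set (L.Formula ((ιb × V) ⊕ (ιb × V))))) ∪
    ((fun ε : L.Formula (γ ⊕ γ) => ε.relabel ra) '' pE) with hΓdef
  have relV : ∀ (v : ιS → M) (φ : L.Formula ιS),
      (φ.relabel Sum.inl).Realize (Sum.elim v prm) ↔ φ.Realize v := by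
    intro v φ
    rw [FirstOrder.Language.Formula.realize_relabel]
    exact Iff.of_eq (congrArg φ.Realize (funext fun i => rfl))
  have relN' : ∀ (v : ιS → M) (ψ : L.Formula (↥N ⊕ ↥N)),
      (ψ.relabel rN).Realize (Sum.elim v prm) ↔
        ψ.Realize (Sum.elim (fun n => v (Sum.inl n)) (Subtype.val : ↥N → M)) := by
    intro v ψ
    rw [FirstOrder.Language.Formula.realize_relabel]
    refine Iff.of_eq (congrArg ψ.Realize (funext fun i => ?_))
    cases i <;> rfl
  have relb' : ∀ (v : ιS → M) (χ : L.Formula ((ιb × V) ⊕ (ιb × V))),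
      (χ.relabel rb).Realize (Sum.elim v prm) ↔
        χ.Realize (Sum.elim (fun i => v (Sum.inr (Sum.inl i))) (flat b)) := by
    intro v χ
    rw [FirstOrder.Language.Formula.realize_relabel]
    refine Iff.of_eq (congrArg χ.Realize (funext fun i => ?_))
    cases i <;> rfl
  have rela' : ∀ (v : ιS → M) (ε : L.Formula (γ ⊕ γ)),
      (ε.relabel ra).Realize (Sum.elim v prm) ↔
        ε.Realize (Sum.elim (fun j => v (Sum.inr (Sum.inr j))) a) := by
    intro v ε
    rw [FirstOrder.Language.Formula.realize_relabel]
    refine Iff.of_eq (congrArg ε.Realize (funext fun i => ?_))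
    cases i <;> rfl
  -- finite satisfiability of `Γ`
  have hfin : ∀ q : Finset (L.Formula (ιS ⊕ ιS)), ↑q ⊆ Γ →
      ∃ v : ιS → M, ∀ φ ∈ (↑q : Set (L.Formula (ιS ⊕ ιS))), φ.Realize (Sum.elim v prm) := by
    intro q hq
    set pick : L.Formula (ιS ⊕ ιS) → Finset (L.Formula ((ιb × V) ⊕ (ιb × V))) :=
      fun x => if h : ∃ χ ∈ (p : Set (L.Formula ((ιb × V) ⊕ (ιb × V)))),
          (FirstOrder.Language.Formula.relabel rb χ) = x then {h.choose} else ∅ with hpickdef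
    obtain ⟨f, hfK, hfagree⟩ := happrox (q.biUnion pick)
    refine ⟨fun i => (f : M ≃[L] M) (prm i), ?_⟩
    intro φ hφ
    by_cases h3 : ∃ χ ∈ (p : Set (L.Formula ((ιb × V) ⊕ (ιb × V)))),
        (FirstOrder.Language.Formula.relabel rb χ) = φ
    · have hχΦ : h3.choose ∈ q.biUnion pick := by
        rw [Finset.mem_biUnion]
        refine ⟨φ, hφ, ?_⟩
        rw [hpickdef]
        simp only [dif_pos h3]
        exact Finset.mem_singleton_self _
      have hmemf : h3.choose ∈ tpOver (L := L) (flat b) (f • flat b) :=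
        (hfagree _ hχΦ).mpr h3.choose_spec.1
      have hreal : (FirstOrder.Language.Formula.relabel rb h3.choose).Realize
          (Sum.elim (fun i => (f : M ≃[L] M) (prm i)) prm) := by
        rw [relb']
        exact hmemf
      rw [← h3.choose_spec.2]
      exact hreal
    · have hφΓ := hq hφ
      rw [hΓdef] at hφΓ
      rcases hφΓ with ((h1 | h2) | h3') | h4
      · obtain ⟨φ₀, hφ₀, rfl⟩ := h1
        rw [relV]
        exact (FirstOrder.Language.StrongHomClass.realize_formula (f : M ≃[L] M) φ₀).mpr hφ₀
      · obtain ⟨ψ, hψ, rfl⟩ := h2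
        rw [relN']
        exact hΨmem f hfK ψ hψ
      · exact absurd h3' h3
      · obtain ⟨ε, hε, rfl⟩ := h4
        rw [rela']
        have hfa : Frel (M := M) pE (⇑(f : M ≃[L] M) ∘ a) a :=
          (mem_AutE_iff_frel pE a hE (f : M ≃[L] M)).mp f.2
        exact hfa ε hε
  -- realize `Γ`
  obtain ⟨v, hv⟩ := hM.2.2 ιS ιS prm Γ hιS hιS hfin
  have hvΓ : ∀ φ ∈ Γ, φ.Realize (Sum.elim v prm) := hv
  have hsame : SameTp (L := L) (M := M) prm v := by
    intro φ
    constructor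
    · intro hr
      have hh := hvΓ _ (Or.inl (Or.inl (Or.inl ⟨φ, hr, rfl⟩)))
      rwa [relV] at hh
    · intro hr
      by_contra hnr
      have hnot : (FirstOrder.Language.Formula.not φ).Realize prm := by
        rw [FirstOrder.Language.Formula.realize_not]; exact hnr
      have hh := hvΓ _ (Or.inl (Or.inl (Or.inl ⟨φ.not, hnot, rfl⟩)))
      rw [relV, FirstOrder.Language.Formula.realize_not] at hh
      exact hh hr
  obtain ⟨f₀, hf₀⟩ := hM.2.1 ιS prm v hιS hsame
  have hf₀E : f₀ ∈ AutE pE a := by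
    rw [mem_AutE_iff_frel pE a hE]
    intro ε hε
    have hh := hvΓ _ (Or.inr ⟨ε, hε, rfl⟩)
    rw [rela'] at hh
    have hva : (fun j => v (Sum.inr (Sum.inr j))) = ⇑f₀ ∘ a := by
      funext j; exact (hf₀ (Sum.inr (Sum.inr j))).symm
    rwa [hva] at hh
  set fS : Ge pE a := ⟨f₀, hf₀E⟩ with hfSdef
  have hfb : fS • flat b = fun i => v (Sum.inr (Sum.inl i)) := by
    funext i; exact hf₀ (Sum.inr (Sum.inl i))
  have hsubp : ∀ χ ∈ (p : Set (L.Formula ((ιb × V) ⊕ (ιb × V)))),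
      χ ∈ tpOver (L := L) (flat b) (fS • flat b) := by
    intro χ hχ
    have hh := hvΓ _ (Or.inl (Or.inr ⟨χ, hχ, rfl⟩))
    rw [relb'] at hh
    rw [mem_tpOver, hfb]
    exact hh
  have htbp : tpOver (L := L) (flat b) (fS • flat b) = ↑p := by
    ext χ
    refine ⟨fun hχ => ?_, hsubp χ⟩
    by_contra hχp
    have hnχ : FirstOrder.Language.Formula.not χ ∈
        (p : Set (L.Formula ((ιb × V) ⊕ (ιb × V)))) := by
      rw [← hg] at hχp ⊢
      rw [mem_tpOver] at hχp ⊢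
      rw [FirstOrder.Language.Formula.realize_not]
      exact hχp
    have hh := hsubp _ hnχ
    rw [mem_tpOver, FirstOrder.Language.Formula.realize_not] at hh
    rw [mem_tpOver] at hχ
    exact hh hχ
  have hfSK : projT κ pE a fS ∈ K := by
    apply hΨW fS
    intro ψ hψ
    have hh := hvΓ _ (Or.inl (Or.inl (Or.inr ⟨ψ, hψ, rfl⟩)))
    rw [relN'] at hh
    rw [mem_tpOver]
    have hvN : (fun n => v (Sum.inl n)) = fS • (Subtype.val : ↥N → M) := by
      funext n; exact (hf₀ (Sum.inl n)).symm
    rwa [hvN] at hh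
  have hXfS : toGS pE a hInv fS ∈ X := by
    intro ι hι c
    exact ⟨fS, hfSK, (flat_toGS_smul pE a hInv fS c).symm⟩
  have hnubp : nub κ pE a hInv b p = projb κ pE a hInv (toGS pE a hInv fS) :=
    nub_eq_projS κ pE a hM hV hInv b hb hbdcl p htbp
  show p ∈ Y
  rw [hYdef, Set.mem_preimage, hnubp]
  exact ⟨toGS pE a hInv fS, hXfS, rfl⟩

end AuxMain

section Statements

variable {γ : Type u} (pE : Set (L.Formula (γ ⊕ γ))) (a : γ → M)
variable {V β : Type u} {pS : Set (L.Formula (V ⊕ β))} {bp : β → M}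


/-- Lemma 2.11: assuming `e ∈ dcl(Σ)`, the subgroups
`Autf_KP(Σ, e)/Autf_L(Σ, e)` and `Autf_S(Σ, e)/Autf_L(Σ, e)` are closed in the
topological group `Gal_L(Σ, e)`. -/
theorem autfKPS_autfSS_closed_in_galL (hM : IsMonster κ L M) (hγ : #γ < κ)
    (hE : Equivalence (Frel (M := M) pE)) (hV : #V < κ) (hβ : #β < κ)
    (hInv : SolInv pE a pS bp)
    (hedcl : eInDclSigma κ pE a pS bp)
    {ιb : Type u} (b : ιb → SolT pS bp)
    (hb : IsLascarTuple κ pE a hInv b) (hbdcl : eInDclTuple pE a (flat b))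
    (N : L.ElementarySubstructure M) (hN : #N < κ)
    (hNdcl : ∀ g : M ≃[L] M, (∀ x ∈ N, g x = x) → g ∈ AutE pE a) :
    @IsClosed _ (galTopb κ pE a hInv b)
      (projb κ pE a hInv '' AutfKPSset κ pE a hInv N) ∧
    @IsClosed _ (galTopb κ pE a hInv b)
      (projb κ pE a hInv '' AutfSSset κ pE a hInv N) := by
  constructor
  · refine closed_proj_preimage κ pE a hM hγ hE hV hInv b hb hbdcl N hN hNdcl
      (@closure _ (galTopT κ pE a N) {projT κ pE a 1}) ?_
    letI := galTopT κ pE a N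
    exact isClosed_closure
  · refine closed_proj_preimage κ pE a hM hγ hE hV hInv b hb hbdcl N hN hNdcl
      (@connectedComponent _ (galTopT κ pE a N) (projT κ pE a 1)) ?_
    letI := galTopT κ pE a N
    exact isClosed_connectedComponent

end Statements

end RelLascar
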